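/- Let A₁,…,Aₙ, B₁,…,Bₙ be bounded linear operators on a complex Hilbert space H. Then the spectral radius of ∑ᵢ AᵢBᵢ satisfies ρ(∑ᵢ₌₁ⁿ AᵢBᵢ) ≤ max over 1 ≤ i ≤ n of [ w(BᵢAᵢ) + (1/2)·∑_{j≠i} (‖BᵢAⱼ‖ + ‖BⱼAᵢ‖) ]. -/

import Mathlib

open Complex

variable {H : Type*} [NormedAddCommGroup H] [InnerProductSpace ℂ H] [CompleteSpace H]

/-- The numerical radius `w(T) = sup {|⟨Tx,x⟩| : ‖x‖ = 1}`. -/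
noncomputable def numRadius (T : H →L[ℂ] H) : ℝ :=
  sSup {r : ℝ | ∃ x : H, ‖x‖ = 1 ∧ r = ‖(inner ℂ (T x) x : ℂ)‖}

/-- The Crawford number `m(T) = inf {|⟨Tx,x⟩| : ‖x‖ = 1}`. -/
noncomputable def crawford (T : H →L[ℂ] H) : ℝ :=
  sInf {r : ℝ | ∃ x : H, ‖x‖ = 1 ∧ r = ‖(inner ℂ (T x) x : ℂ)‖}

/-- The real part `Re(T) = (T + T*)/2`. -/
noncomputable def reOp (T : H →L[ℂ] H) : H →L[ℂ] H := (2 : ℂ)⁻¹ • (T + star T)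

/-- The imaginary part `Im(T) = (T - T*)/(2i)`. -/
noncomputable def imOp (T : H →L[ℂ] H) : H →L[ℂ] H := (2 * Complex.I)⁻¹ • (T - star T)

section Aux

set_option linter.unusedSectionVars false
set_option maxHeartbeats 1000000

lemma numRadius_bdd (T : H →L[ℂ] H) :
    BddAbove {r : ℝ | ∃ x : H, ‖x‖ = 1 ∧ r = ‖(inner ℂ (T x) x : ℂ)‖} := by
  refine ⟨‖T‖, ?_⟩
  rintro r ⟨x, hx, rfl⟩
  calc ‖(inner ℂ (T x) x : ℂ)‖ ≤ ‖T x‖ * ‖x‖ := norm_inner_le_norm _ _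
    _ ≤ ‖T‖ * ‖x‖ * ‖x‖ := by
        gcongr; exact T.le_opNorm x
    _ = ‖T‖ := by rw [hx]; ring

lemma inner_le_numRadius (T : H →L[ℂ] H) {x : H} (hx : ‖x‖ = 1) :
    ‖(inner ℂ (T x) x : ℂ)‖ ≤ numRadius T :=
  le_csSup (numRadius_bdd T) ⟨x, hx, rfl⟩

lemma numRadius_nonneg [Nontrivial H] (T : H →L[ℂ] H) : 0 ≤ numRadius T := by
  obtain ⟨x, hx⟩ := exists_norm_eq H (zero_le_one (α := ℝ))
  exact le_trans (norm_nonneg _) (inner_le_numRadius T hx)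

lemma inner_le_numRadius_sq (T : H →L[ℂ] H) (x : H) :
    ‖(inner ℂ (T x) x : ℂ)‖ ≤ numRadius T * ‖x‖ ^ 2 := by
  rcases eq_or_ne x 0 with rfl | hx
  · simp
  · have hn : ‖x‖ ≠ 0 := norm_ne_zero_iff.mpr hx
    set u : H := ((‖x‖ : ℂ))⁻¹ • x with hu
    have hu1 : ‖u‖ = 1 := by
      rw [hu, norm_smul, norm_inv, Complex.norm_real, norm_norm, inv_mul_cancel₀ hn]
    have key : (inner ℂ (T u) u : ℂ) = ((‖x‖ : ℂ) ^ 2)⁻¹ * inner ℂ (T x) x := by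
      rw [hu]
      rw [map_smul]
      rw [inner_smul_left, inner_smul_right]
      simp only [Complex.real_smul, Complex.ofReal_inv, map_inv₀, Complex.conj_ofReal]
      ring
    have h1 := inner_le_numRadius T hu1
    rw [key, norm_mul] at h1
    have h2 : ‖((‖x‖ : ℂ) ^ 2)⁻¹‖ = (‖x‖ ^ 2)⁻¹ := by
      rw [norm_inv, norm_pow, Complex.norm_real, norm_norm]
    rw [h2] at h1
    have hx2 : (0:ℝ) < ‖x‖ ^ 2 := by positivity
    calc ‖(inner ℂ (T x) x : ℂ)‖ = (‖x‖^2)⁻¹ * ‖(inner ℂ (T x) x : ℂ)‖ * ‖x‖^2 := by field_simp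
      _ ≤ numRadius T * ‖x‖ ^ 2 := by gcongr

lemma lower_bound (T : H →L[ℂ] H) (lam : ℂ) (x : H) :
    (‖lam‖ - numRadius T) * ‖x‖ ≤ ‖lam • x - T x‖ := by
  rcases eq_or_ne x 0 with rfl | hx
  · simp
  · have hn : (0:ℝ) < ‖x‖ := norm_pos_iff.mpr hx
    rw [← mul_le_mul_iff_left₀ hn]
    have h1 : (inner ℂ (lam • x - T x) x : ℂ) = (starRingEnd ℂ) lam * (‖x‖:ℂ)^2 - inner ℂ (T x) x := by
      rw [inner_sub_left, inner_smul_left, inner_self_eq_norm_sq_to_K]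
      norm_num
    have h2 : ‖(inner ℂ (lam • x - T x) x : ℂ)‖ ≤ ‖lam • x - T x‖ * ‖x‖ := norm_inner_le_norm _ _
    have h3 : ‖lam‖ * ‖x‖^2 - numRadius T * ‖x‖^2 ≤ ‖(inner ℂ (lam • x - T x) x : ℂ)‖ := by
      rw [h1]
      calc ‖lam‖ * ‖x‖^2 - numRadius T * ‖x‖^2
          ≤ ‖(starRingEnd ℂ) lam * (‖x‖:ℂ)^2‖ - ‖(inner ℂ (T x) x : ℂ)‖ := by
            have : ‖(starRingEnd ℂ) lam * (‖x‖:ℂ)^2‖ = ‖lam‖ * ‖x‖^2 := by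
              rw [norm_mul, RingHomIsometric.norm_map, norm_pow, Complex.norm_real, norm_norm]
            rw [this]
            have := inner_le_numRadius_sq T x
            linarith
        _ ≤ ‖(starRingEnd ℂ) lam * (‖x‖:ℂ)^2 - inner ℂ (T x) x‖ := norm_sub_norm_le _ _
    nlinarith [norm_nonneg x]

lemma isUnit_of_numRadius_lt (T : H →L[ℂ] H) {lam : ℂ} (h : numRadius T < ‖lam‖) :
    IsUnit (algebraMap ℂ (H →L[ℂ] H) lam - T) := by
  set T' : H →L[ℂ] H := algebraMap ℂ (H →L[ℂ] H) lam - T with hT'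
  have hT'app : ∀ x, T' x = lam • x - T x := by
    intro x
    simp [hT', Algebra.algebraMap_eq_smul_one]
  set ε : ℝ := ‖lam‖ - numRadius T with hε
  have hε0 : 0 < ε := sub_pos.mpr h
  have hlb : ∀ x : H, ε * ‖x‖ ≤ ‖T' x‖ := by
    intro x; rw [hT'app]; exact lower_bound T lam x
  have hanti : AntilipschitzWith (⟨ε⁻¹, by positivity⟩ : NNReal) T' := by
    apply T'.antilipschitz_of_bound
    intro x
    change ‖x‖ ≤ ε⁻¹ * ‖T' x‖
    rw [← mul_le_mul_iff_right₀ hε0]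
    calc ε * ‖x‖ ≤ ‖T' x‖ := hlb x
      _ = ε * (ε⁻¹ * ‖T' x‖) := by field_simp
  have hinj : Function.Injective T' := hanti.injective
  have hclosed : IsClosed (Set.range T') := hanti.isClosed_range T'.uniformContinuous
  have hrange : ((LinearMap.range (T' : H →ₗ[ℂ] H) : Submodule ℂ H) : Set H) = Set.range T' := by
    ext y; simp [LinearMap.mem_range]
  have hclosed' : IsClosed ((LinearMap.range (T' : H →ₗ[ℂ] H) : Submodule ℂ H) : Set H) := by
    rw [hrange]; exact hclosed
  haveI : CompleteSpace (LinearMap.range (T' : H →ₗ[ℂ] H) : Submodule ℂ H) := hclosed'.completeSpace_coe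
  have horth : (LinearMap.range (T' : H →ₗ[ℂ] H) : Submodule ℂ H)ᗮ = ⊥ := by
    rw [Submodule.eq_bot_iff]
    intro y hy
    have h0 : (inner ℂ (T' y) y : ℂ) = 0 :=
      (Submodule.mem_orthogonal _ y).mp hy (T' y) (LinearMap.mem_range_self _ y)
    have h1 : (starRingEnd ℂ) lam * (inner ℂ y y : ℂ) = inner ℂ (T y) y := by
      rw [hT'app, inner_sub_left, inner_smul_left] at h0
      exact sub_eq_zero.mp h0
    have h2 : ‖lam‖ * ‖y‖^2 ≤ numRadius T * ‖y‖^2 := by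
      have h3 := inner_le_numRadius_sq T y
      rw [← h1, norm_mul, RingHomIsometric.norm_map, inner_self_eq_norm_sq_to_K] at h3
      simpa using h3
    have : ‖y‖^2 ≤ 0 := by nlinarith
    have : ‖y‖ = 0 := by nlinarith [norm_nonneg y, sq_nonneg (‖y‖)]
    exact norm_eq_zero.mp this
  have hsurj : LinearMap.range (T' : H →ₗ[ℂ] H) = ⊤ := Submodule.orthogonal_eq_bot_iff.mp horth
  rw [ContinuousLinearMap.isUnit_iff_bijective]
  exact ⟨hinj, LinearMap.range_eq_top.mp hsurj⟩

lemma isUnit_swap {K : Type*} [NormedAddCommGroup K] [NormedSpace ℂ K]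
    (P : K →L[ℂ] H) (Q : H →L[ℂ] K) {lam : ℂ} (hlam : lam ≠ 0)
    (h : IsUnit (algebraMap ℂ (K →L[ℂ] K) lam - Q ∘L P)) :
    IsUnit (algebraMap ℂ (H →L[ℂ] H) lam - P ∘L Q) := by
  rcases h with ⟨u, hu⟩
  set C : K →L[ℂ] K := algebraMap ℂ (K →L[ℂ] K) lam - Q ∘L P with hC
  set D : K →L[ℂ] K := ↑u⁻¹ with hD
  have hD1 : D * C = 1 := by rw [hD, ← hu]; exact u.inv_mul
  have hD2 : C * D = 1 := by rw [hD, ← hu]; exact u.mul_inv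
  have key2 : ∀ z : K, lam • D z - Q (P (D z)) = z := by
    intro z
    have h2 := DFunLike.congr_fun hD2 z
    simpa [hC, Algebra.algebraMap_eq_smul_one, ContinuousLinearMap.mul_apply] using h2
  have key1 : ∀ z : K, D (lam • z - Q (P z)) = z := by
    intro z
    have h1 := DFunLike.congr_fun hD1 z
    simpa [hC, Algebra.algebraMap_eq_smul_one, ContinuousLinearMap.mul_apply] using h1
  refine isUnit_iff_exists.mpr ⟨lam⁻¹ • (1 + P ∘L (D ∘L Q)), ?_, ?_⟩
  · ext x
    have e2 : Q (P (D (Q x))) = lam • D (Q x) - Q x := by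
      have h2 := key2 (Q x)
      have h3 : Q (P (D (Q x))) = lam • D (Q x) - (lam • D (Q x) - Q (P (D (Q x)))) := by abel
      rw [h3, h2]
    simp only [ContinuousLinearMap.mul_apply, ContinuousLinearMap.smul_apply,
      ContinuousLinearMap.add_apply, ContinuousLinearMap.one_apply,
      ContinuousLinearMap.coe_comp', Function.comp_apply, ContinuousLinearMap.sub_apply,
      Algebra.algebraMap_eq_smul_one, map_add, map_smul, ContinuousLinearMap.one_def,
      ContinuousLinearMap.id_apply]
    rw [e2, map_sub, map_smul]
    match_scalars <;> field_simp <;> ring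
  · ext x
    simp only [ContinuousLinearMap.mul_apply, ContinuousLinearMap.smul_apply,
      ContinuousLinearMap.add_apply, ContinuousLinearMap.one_apply,
      ContinuousLinearMap.coe_comp', Function.comp_apply, ContinuousLinearMap.sub_apply,
      Algebra.algebraMap_eq_smul_one, map_sub, map_smul, ContinuousLinearMap.one_def,
      ContinuousLinearMap.id_apply]
    have e1 : D (Q (P (Q x))) = lam • D (Q x) - Q x := by
      have h1 := key1 (Q x)
      rw [map_sub, map_smul] at h1
      have h3 : D (Q (P (Q x))) = lam • D (Q x) - (lam • D (Q x) - D (Q (P (Q x)))) := by abel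
      rw [h3, h1]
    rw [e1, map_sub, map_smul]
    match_scalars <;> field_simp <;> ring

end Aux

set_option maxHeartbeats 1600000 in
theorem stmt7 (n : ℕ) (hn : 0 < n) (A B : Fin n → (H →L[ℂ] H)) :
    spectralRadius ℂ (∑ i, A i * B i) ≤
      ENNReal.ofReal
        (Finset.univ.sup' (Finset.univ_nonempty_iff.mpr (Fin.pos_iff_nonempty.mp hn))
          fun i => numRadius (B i * A i)
            + (1/2) * ∑ j ∈ Finset.univ.erase i, (‖B i * A j‖ + ‖B j * A i‖)) := by
  classical
  set M : ℝ := Finset.univ.sup' (Finset.univ_nonempty_iff.mpr (Fin.pos_iff_nonempty.mp hn))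
      (fun i => numRadius (B i * A i)
        + (1/2) * ∑ j ∈ Finset.univ.erase i, (‖B i * A j‖ + ‖B j * A i‖)) with hM
  rcases subsingleton_or_nontrivial H with hH | hH
  · -- trivial Hilbert space
    have hspec : spectrum ℂ (∑ i, A i * B i) = ∅ := by
      ext k
      simp only [Set.mem_empty_iff_false, iff_false, spectrum.mem_iff, not_not]
      exact isUnit_of_subsingleton _
    rw [spectralRadius, hspec]
    simp
  · -- nontrivial case
    haveI : Nonempty (Fin n) := Fin.pos_iff_nonempty.mp hn
    haveI : CompleteSpace (PiLp 2 fun _ : Fin n => H) :=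
      inferInstance
    haveI : Nontrivial (PiLp 2 fun _ : Fin n => H) :=
      inferInstance
    set e : (PiLp 2 fun _ : Fin n => H) ≃L[ℂ] (Fin n → H) :=
      PiLp.continuousLinearEquiv 2 ℂ (fun _ : Fin n => H) with he
    set AA : (PiLp 2 fun _ : Fin n => H) →L[ℂ] H :=
      (∑ j : Fin n, (A j).comp (ContinuousLinearMap.proj j)).comp (e : (PiLp 2 fun _ : Fin n => H) →L[ℂ] (Fin n → H))
      with hAA
    set BB : H →L[ℂ] (PiLp 2 fun _ : Fin n => H) :=
      ((e.symm : (Fin n → H) →L[ℂ] (PiLp 2 fun _ : Fin n => H))).comp (ContinuousLinearMap.pi fun i => B i) with hBB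
    have hAapp : ∀ x : PiLp 2 fun _ : Fin n => H, AA x = ∑ j, A j (x j) := by
      intro x
      simp only [hAA, he, ContinuousLinearMap.coe_comp', Function.comp_apply,
        ContinuousLinearMap.sum_apply, ContinuousLinearMap.proj_apply,
        ContinuousLinearEquiv.coe_coe]
      rfl
    have hBapp : ∀ (y : H) (i : Fin n), (BB y) i = B i y := by
      intro y i
      simp only [hBB, he, ContinuousLinearMap.coe_comp', Function.comp_apply,
        ContinuousLinearMap.pi_apply, ContinuousLinearEquiv.coe_coe]
      rfl
    have hS : AA ∘L BB = ∑ i, A i * B i := by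
      ext y
      rw [ContinuousLinearMap.comp_apply, hAapp]
      rw [ContinuousLinearMap.sum_apply]
      exact Finset.sum_congr rfl fun j _ => by rw [hBapp, ContinuousLinearMap.mul_apply]
    -- the numerical radius estimate for the operator matrix
    have hwC : numRadius (BB ∘L AA) ≤ M := by
      have hM0 : 0 ≤ M := by
        refine le_trans ?_ (Finset.le_sup' _ (Finset.mem_univ (⟨0, hn⟩ : Fin n)))
        have h1 := numRadius_nonneg (B (⟨0, hn⟩ : Fin n) * A (⟨0, hn⟩ : Fin n))
        have h2 : (0:ℝ) ≤ ∑ j ∈ Finset.univ.erase (⟨0, hn⟩ : Fin n),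
            (‖B (⟨0, hn⟩ : Fin n) * A j‖ + ‖B j * A (⟨0, hn⟩ : Fin n)‖) :=
          Finset.sum_nonneg fun j _ => by positivity
        nlinarith
      apply Real.sSup_le _ hM0
      rintro r ⟨x, hx, rfl⟩
      -- the main estimate
      have hsum : ∑ i, ‖x i‖^2 = 1 := by
        have h := PiLp.norm_sq_eq_of_L2 (fun _ : Fin n => H) x
        rw [hx, one_pow] at h
        exact h.symm
      have hCx : ∀ i, ((BB (AA x)) i) = ∑ j, (B i * A j) (x j) := by
        intro i
        rw [hBapp, hAapp, map_sum]
        exact Finset.sum_congr rfl fun j _ => by rw [ContinuousLinearMap.mul_apply]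
      have step1 : ‖(inner ℂ ((BB ∘L AA) x) x : ℂ)‖ ≤
          ∑ i, (numRadius (B i * A i) * ‖x i‖^2
            + ∑ j ∈ Finset.univ.erase i, ‖B i * A j‖ * (‖x i‖^2 + ‖x j‖^2)/2) := by
        rw [ContinuousLinearMap.comp_apply]
        calc ‖(inner ℂ (BB (AA x)) x : ℂ)‖
            = ‖∑ i, (inner ℂ ((BB (AA x)) i) (x i) : ℂ)‖ := by rw [PiLp.inner_apply]
          _ ≤ ∑ i, ‖(inner ℂ ((BB (AA x)) i) (x i) : ℂ)‖ := norm_sum_le _ _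
          _ ≤ _ := by
              apply Finset.sum_le_sum
              intro i _
              rw [hCx i]
              calc ‖(inner ℂ (∑ j, (B i * A j) (x j)) (x i) : ℂ)‖
                  = ‖∑ j, (inner ℂ ((B i * A j) (x j)) (x i) : ℂ)‖ := by rw [sum_inner]
                _ ≤ ∑ j, ‖(inner ℂ ((B i * A j) (x j)) (x i) : ℂ)‖ := norm_sum_le _ _
                _ = ‖(inner ℂ ((B i * A i) (x i)) (x i) : ℂ)‖
                    + ∑ j ∈ Finset.univ.erase i, ‖(inner ℂ ((B i * A j) (x j)) (x i) : ℂ)‖ :=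
                    (Finset.add_sum_erase _ _ (Finset.mem_univ i)).symm
                _ ≤ _ := by
                    gcongr with j hj
                    · exact inner_le_numRadius_sq _ _
                    · calc ‖(inner ℂ ((B i * A j) (x j)) (x i) : ℂ)‖
                          ≤ ‖(B i * A j) (x j)‖ * ‖x i‖ := norm_inner_le_norm _ _
                        _ ≤ ‖B i * A j‖ * ‖x j‖ * ‖x i‖ := by
                            gcongr; exact ContinuousLinearMap.le_opNorm _ _
                        _ ≤ ‖B i * A j‖ * (‖x i‖^2 + ‖x j‖^2)/2 := by
                            nlinarith [sq_nonneg (‖x i‖ - ‖x j‖), norm_nonneg (B i * A j),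
                              norm_nonneg (x i), norm_nonneg (x j)]
      -- rearrangement
      have expand : ∀ i, ∑ j ∈ Finset.univ.erase i, ‖B i * A j‖ * (‖x i‖^2 + ‖x j‖^2)/2
          = (∑ j ∈ Finset.univ.erase i, ‖B i * A j‖ * ‖x i‖^2/2)
            + ∑ j ∈ Finset.univ.erase i, ‖B i * A j‖ * ‖x j‖^2/2 := by
        intro i
        rw [← Finset.sum_add_distrib]
        exact Finset.sum_congr rfl fun j _ => by ring
      have swap : (∑ i, ∑ j ∈ Finset.univ.erase i, ‖B i * A j‖ * ‖x j‖^2/2)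
          = ∑ i, ∑ j ∈ Finset.univ.erase i, ‖B j * A i‖ * ‖x i‖^2/2 := by
        exact Finset.sum_comm' (by
          intro a b
          simp only [Finset.mem_univ, Finset.mem_erase, true_and, and_true, ne_eq]
          exact ⟨fun h => h ∘ Eq.symm, fun h => h ∘ Eq.symm⟩)
      have factor : ∀ i, numRadius (B i * A i) * ‖x i‖^2
            + ((∑ j ∈ Finset.univ.erase i, ‖B i * A j‖ * ‖x i‖^2/2)
              + ∑ j ∈ Finset.univ.erase i, ‖B j * A i‖ * ‖x i‖^2/2)
          = (numRadius (B i * A i)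
              + (1/2) * ∑ j ∈ Finset.univ.erase i, (‖B i * A j‖ + ‖B j * A i‖)) * ‖x i‖^2 := by
        intro i
        rw [← Finset.sum_add_distrib, add_mul, Finset.mul_sum, Finset.sum_mul]
        congr 1
        exact Finset.sum_congr rfl fun j _ => by ring
      calc ‖(inner ℂ ((BB ∘L AA) x) x : ℂ)‖
          ≤ ∑ i, (numRadius (B i * A i) * ‖x i‖^2
            + ∑ j ∈ Finset.univ.erase i, ‖B i * A j‖ * (‖x i‖^2 + ‖x j‖^2)/2) := step1
        _ = (∑ i, numRadius (B i * A i) * ‖x i‖^2)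
            + ((∑ i, ∑ j ∈ Finset.univ.erase i, ‖B i * A j‖ * ‖x i‖^2/2)
              + ∑ i, ∑ j ∈ Finset.univ.erase i, ‖B i * A j‖ * ‖x j‖^2/2) := by
            rw [← Finset.sum_add_distrib, ← Finset.sum_add_distrib]
            exact Finset.sum_congr rfl fun i _ => by rw [expand i]
        _ = ∑ i, (numRadius (B i * A i)
              + (1/2) * ∑ j ∈ Finset.univ.erase i, (‖B i * A j‖ + ‖B j * A i‖)) * ‖x i‖^2 := by
            rw [swap, ← Finset.sum_add_distrib, ← Finset.sum_add_distrib]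
            exact Finset.sum_congr rfl fun i _ => factor i
        _ ≤ ∑ i, M * ‖x i‖^2 := by
            apply Finset.sum_le_sum
            intro i _
            have hle : numRadius (B i * A i)
                + (1/2) * ∑ j ∈ Finset.univ.erase i, (‖B i * A j‖ + ‖B j * A i‖) ≤ M := by
              rw [hM]
              exact Finset.le_sup' (fun i => numRadius (B i * A i)
                + (1/2) * ∑ j ∈ Finset.univ.erase i, (‖B i * A j‖ + ‖B j * A i‖))
                (Finset.mem_univ i)
            have : (0:ℝ) ≤ ‖x i‖^2 := sq_nonneg _
            nlinarith
        _ = M := by rw [← Finset.mul_sum, hsum, mul_one]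
    -- conclude
    rw [spectralRadius]
    refine iSup₂_le fun k hk => ?_
    rw [← enorm_eq_nnnorm, ← ofReal_norm]
    apply ENNReal.ofReal_le_ofReal
    by_contra hcon
    push_neg at hcon
    have hk0 : k ≠ 0 := by
      intro h0
      rw [h0, norm_zero] at hcon
      have hM0 : 0 ≤ M := le_trans (numRadius_nonneg _) hwC
      linarith
    have hunit : IsUnit (algebraMap ℂ
        ((PiLp 2 fun _ : Fin n => H) →L[ℂ] (PiLp 2 fun _ : Fin n => H)) k - BB ∘L AA) :=
      isUnit_of_numRadius_lt _ (lt_of_le_of_lt hwC hcon)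
    have := isUnit_swap AA BB hk0 hunit
    rw [hS] at this
    exact (spectrum.mem_iff.mp hk) this
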